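/- Let q_α be a function from (0,1) to pmfs on a finite set Y that is continuous in total variation, and let W be a pmf on Y with D_α(W‖q_α) < ∞ for all α ∈ (0,1). Then the tilted pmf W^α_{q_α}(y) := e^{(1-α)D_α(W‖q_α)}·W(y)^α·q_α(y)^{1-α} is a continuous function of α from (0,1) to pmfs on Y in total variation, and the functions α ↦ D_α(W‖q_α), α ↦ D_1(W^α_{q_α}‖W), and α ↦ D_1(W^α_{q_α}‖q_α) are continuous from (0,1) to [0,∞). -/

import Mathlib

open Real MeasureTheory Filter

def IsPMF {Y : Type*} [Fintype Y] (W : Y → ℝ) : Prop :=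
  (∀ y, 0 ≤ W y) ∧ ∑ y, W y = 1

noncomputable def renyiDiv {Y : Type*} [Fintype Y] (α : ℝ) (W Q : Y → ℝ) : ℝ :=
  if α = 1 then ∑ y, W y * Real.log (W y / Q y)
  else (α - 1)⁻¹ * Real.log (∑ y, W y ^ α * Q y ^ (1 - α))

open Classical in
/-- Extended-real-valued order-`α` Rényi divergence, taking the value `⊤` when the
divergence is infinite. -/
noncomputable def renyiDivE {Y : Type*} [Fintype Y] (α : ℝ) (W Q : Y → ℝ) : ENNReal :=
  if α = 1 then
    (if ∀ y, Q y = 0 → W y = 0 then ENNReal.ofReal (renyiDiv 1 W Q) else ⊤)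
  else
    (if 0 < ∑ y, W y ^ α * Q y ^ (1 - α) then ENNReal.ofReal (renyiDiv α W Q) else ⊤)

/-- The order-`α` tilted pmf `W^α_Q`. -/
noncomputable def tilt {Y : Type*} [Fintype Y] (α : ℝ) (W Q : Y → ℝ) : Y → ℝ :=
  fun y => Real.exp ((1 - α) * renyiDiv α W Q) * W y ^ α * Q y ^ (1 - α)

/-- The order-`α` Rényi information `I_α(P;W)` (mutual information for `α = 1`). -/
noncomputable def renyiInfo {X Y : Type*} [Fintype X] [Fintype Y] (α : ℝ) (P : X → ℝ)
    (W : X → Y → ℝ) : ℝ :=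
  if α = 1 then ∑ x, P x * ∑ y, W x y * Real.log (W x y / (∑ x', P x' * W x' y))
  else (α / (α - 1)) * Real.log (∑ y, (∑ x, P x * W x y ^ α) ^ α⁻¹)

/-- The order-`α` Rényi capacity `C_α(W) = sup_P I_α(P;W)`. -/
noncomputable def renyiCap {X Y : Type*} [Fintype X] [Fintype Y] (α : ℝ) (W : X → Y → ℝ) : ℝ :=
  sSup {c | ∃ P : X → ℝ, IsPMF P ∧ c = renyiInfo α P W}

/-- The sphere packing exponent `E_sp(R,W)`. -/
noncomputable def spe {X Y : Type*} [Fintype X] [Fintype Y] (R : ℝ) (W : X → Y → ℝ) : ℝ :=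
  sSup {e | ∃ α ∈ Set.Ioo (0:ℝ) 1, e = ((1 - α) / α) * (renyiCap α W - R)}

/-- The order-`α` Rényi mean `q_{α,P}`. -/
noncomputable def renyiMean {X Y : Type*} [Fintype X] [Fintype Y] (α : ℝ) (P : X → ℝ)
    (W : X → Y → ℝ) : Y → ℝ :=
  fun y => (∑ x, P x * W x y ^ α) ^ α⁻¹ / ∑ y', (∑ x, P x * W x y' ^ α) ^ α⁻¹

lemma log_div_helper (x c : ℝ) (h : x ≠ 0 → c ≠ 0) :
    x * Real.log (x / c) = x * Real.log x - x * Real.log c := by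
  rcases eq_or_ne x 0 with h0 | h0
  · simp [h0]
  · rw [Real.log_div h0 (h h0), mul_sub]

/-- continuity in the order of the tilted pmf and of the associated
divergences, for a continuously varying reference family `q_α`. -/
theorem tilt_continuous_in_order {Y : Type*} [Fintype Y] (q : ℝ → Y → ℝ)
    (hq : ∀ α ∈ Set.Ioo (0:ℝ) 1, IsPMF (q α))
    (hqcont : ∀ α ∈ Set.Ioo (0:ℝ) 1,
      Filter.Tendsto (fun β => ∑ y, |q β y - q α y|) (nhdsWithin α (Set.Ioo 0 1)) (nhds 0))
    (W : Y → ℝ) (hW : IsPMF W)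
    (hfin : ∀ α ∈ Set.Ioo (0:ℝ) 1, renyiDivE α W (q α) ≠ ⊤) :
    (∀ α ∈ Set.Ioo (0:ℝ) 1,
      Filter.Tendsto (fun β => ∑ y, |tilt β W (q β) y - tilt α W (q α) y|)
        (nhdsWithin α (Set.Ioo 0 1)) (nhds 0)) ∧
    ContinuousOn (fun α => renyiDiv α W (q α)) (Set.Ioo 0 1) ∧
    ContinuousOn (fun α => renyiDiv 1 (tilt α W (q α)) W) (Set.Ioo 0 1) ∧
    ContinuousOn (fun α => renyiDiv 1 (tilt α W (q α)) (q α)) (Set.Ioo 0 1) := by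
  classical
  -- coordinatewise continuity of q
  have hqy : ∀ (y : Y), ∀ α ∈ Set.Ioo (0:ℝ) 1,
      Filter.Tendsto (fun β => q β y) (nhdsWithin α (Set.Ioo 0 1)) (nhds (q α y)) := by
    intro y α hα
    rw [tendsto_iff_dist_tendsto_zero]
    refine squeeze_zero (fun β => dist_nonneg) (fun β => ?_) (hqcont α hα)
    rw [Real.dist_eq]
    exact Finset.single_le_sum (f := fun y => |q β y - q α y|)
      (fun i _ => abs_nonneg _) (Finset.mem_univ y)
  -- positivity of the normalizing sum
  have hspos : ∀ α ∈ Set.Ioo (0:ℝ) 1, 0 < ∑ y, W y ^ α * q α y ^ (1 - α) := by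
    intro α hα
    have h := hfin α hα
    rw [renyiDivE, if_neg hα.2.ne] at h
    by_contra hc
    rw [if_neg hc] at h
    exact h rfl
  -- continuity of A y = W y ^ β
  have hA : ∀ (y : Y), ∀ α ∈ Set.Ioo (0:ℝ) 1,
      Filter.Tendsto (fun β : ℝ => W y ^ β) (nhdsWithin α (Set.Ioo 0 1)) (nhds (W y ^ α)) :=
    fun y α hα => Filter.Tendsto.rpow tendsto_const_nhds
      (tendsto_nhdsWithin_of_tendsto_nhds tendsto_id) (Or.inr hα.1)
  -- continuity of B y = q β y ^ (1 - β)
  have hB : ∀ (y : Y), ∀ α ∈ Set.Ioo (0:ℝ) 1,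
      Filter.Tendsto (fun β : ℝ => q β y ^ (1 - β)) (nhdsWithin α (Set.Ioo 0 1))
        (nhds (q α y ^ (1 - α))) := by
    intro y α hα
    exact Filter.Tendsto.rpow (hqy y α hα)
      (tendsto_nhdsWithin_of_tendsto_nhds (tendsto_const_nhds.sub tendsto_id))
      (Or.inr (by linarith [hα.2]))
  -- continuity of the sum s
  have hS : ∀ α ∈ Set.Ioo (0:ℝ) 1,
      Filter.Tendsto (fun β : ℝ => ∑ y, W y ^ β * q β y ^ (1 - β))
        (nhdsWithin α (Set.Ioo 0 1)) (nhds (∑ y, W y ^ α * q α y ^ (1 - α))) := by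
    intro α hα
    exact tendsto_finset_sum _ (fun y _ => (hA y α hα).mul (hB y α hα))
  -- part 2 : continuity of α ↦ D_α(W‖q_α)
  have hD : ContinuousOn (fun α => renyiDiv α W (q α)) (Set.Ioo 0 1) := by
    have : ∀ α ∈ Set.Ioo (0:ℝ) 1, renyiDiv α W (q α)
        = (α - 1)⁻¹ * Real.log (∑ y, W y ^ α * q α y ^ (1 - α)) := by
      intro α hα; rw [renyiDiv, if_neg hα.2.ne]
    refine ContinuousOn.congr ?_ this
    intro α hα
    refine Filter.Tendsto.mul ?_ ?_
    · exact (tendsto_nhdsWithin_of_tendsto_nhds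
        (((tendsto_id.sub tendsto_const_nhds).inv₀ (by simpa using sub_ne_zero.mpr hα.2.ne))))
    · exact (Real.continuousAt_log (hspos α hα).ne').tendsto.comp (hS α hα)
  -- continuity of the tilted pmf coordinates
  have hT : ∀ (y : Y), ∀ α ∈ Set.Ioo (0:ℝ) 1,
      Filter.Tendsto (fun β => tilt β W (q β) y) (nhdsWithin α (Set.Ioo 0 1))
        (nhds (tilt α W (q α) y)) := by
    intro y α hα
    refine Filter.Tendsto.mul (Filter.Tendsto.mul ?_ (hA y α hα)) (hB y α hα)
    exact (Real.continuous_exp.tendsto _).comp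
      (Filter.Tendsto.mul
        (tendsto_nhdsWithin_of_tendsto_nhds (tendsto_const_nhds.sub tendsto_id)) (hD α hα))
  -- continuity of the exp factor
  have hE : ∀ α ∈ Set.Ioo (0:ℝ) 1,
      Filter.Tendsto (fun β => Real.exp ((1 - β) * renyiDiv β W (q β)))
        (nhdsWithin α (Set.Ioo 0 1)) (nhds (Real.exp ((1 - α) * renyiDiv α W (q α)))) := by
    intro α hα
    exact (Real.continuous_exp.tendsto _).comp
      (Filter.Tendsto.mul
        (tendsto_nhdsWithin_of_tendsto_nhds (tendsto_const_nhds.sub tendsto_id)) (hD α hα))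
  -- T vanishing facts
  have hTzeroW : ∀ (y : Y), ∀ α ∈ Set.Ioo (0:ℝ) 1, W y = 0 → tilt α W (q α) y = 0 := by
    intro y α hα h0
    simp [tilt, h0, Real.zero_rpow hα.1.ne']
  have hTzeroq : ∀ (y : Y), ∀ α ∈ Set.Ioo (0:ℝ) 1, q α y = 0 → tilt α W (q α) y = 0 := by
    intro y α hα h0
    have h1 : (1:ℝ) - α ≠ 0 := by linarith [hα.2]
    simp [tilt, h0, Real.zero_rpow h1]
  refine ⟨?_, hD, ?_, ?_⟩
  · -- part 1 : total-variation continuity of the tilted pmf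
    intro α hα
    have : Filter.Tendsto (fun β => ∑ y, |tilt β W (q β) y - tilt α W (q α) y|)
        (nhdsWithin α (Set.Ioo 0 1)) (nhds (∑ y : Y, |tilt α W (q α) y - tilt α W (q α) y|)) := by
      refine tendsto_finset_sum _ (fun y _ => ?_)
      exact (continuous_abs.tendsto _).comp ((hT y α hα).sub tendsto_const_nhds)
    simpa using this
  · -- part 3 : continuity of α ↦ D_1(tilt α ‖ W)
    have heq : ∀ α ∈ Set.Ioo (0:ℝ) 1, renyiDiv 1 (tilt α W (q α)) W
        = ∑ y, (tilt α W (q α) y * Real.log (tilt α W (q α) y)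
            - tilt α W (q α) y * Real.log (W y)) := by
      intro α hα
      rw [renyiDiv, if_pos rfl]
      refine Finset.sum_congr rfl (fun y _ => ?_)
      refine log_div_helper _ _ (fun hne => ?_)
      intro h0
      exact hne (hTzeroW y α hα h0)
    refine ContinuousOn.congr ?_ heq
    intro α hα
    refine tendsto_finset_sum _ (fun y _ => Filter.Tendsto.sub ?_ ?_)
    · exact (Real.continuous_mul_log.tendsto _).comp (hT y α hα)
    · exact (hT y α hα).mul tendsto_const_nhds
  · -- part 4 : continuity of α ↦ D_1(tilt α ‖ q α)
    have heq : ∀ α ∈ Set.Ioo (0:ℝ) 1, renyiDiv 1 (tilt α W (q α)) (q α)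
        = ∑ y, (tilt α W (q α) y * Real.log (tilt α W (q α) y)
            - Real.exp ((1 - α) * renyiDiv α W (q α)) * W y ^ α
              * ((1 - α)⁻¹ * (q α y ^ (1 - α) * Real.log (q α y ^ (1 - α))))) := by
      intro α hα
      have h1 : (1:ℝ) - α ≠ 0 := by linarith [hα.2]
      rw [renyiDiv, if_pos rfl]
      refine Finset.sum_congr rfl (fun y _ => ?_)
      rcases eq_or_lt_of_le ((hq α hα).1 y) with hq0 | hq0
      · rw [hTzeroq y α hα hq0.symm, ← hq0, Real.zero_rpow h1]
        simp
      · rcases eq_or_lt_of_le (hW.1 y) with hW0 | hW0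
        · rw [hTzeroW y α hα hW0.symm, ← hW0, Real.zero_rpow hα.1.ne']
          simp
        · have hlog : Real.log (q α y ^ (1 - α)) = (1 - α) * Real.log (q α y) :=
            Real.log_rpow hq0 _
          have hTpos : tilt α W (q α) y ≠ 0 :=
            ne_of_gt (mul_pos (mul_pos (Real.exp_pos _) (Real.rpow_pos_of_pos hW0 α))
              (Real.rpow_pos_of_pos hq0 (1 - α)))
          rw [log_div_helper _ _ (fun _ => hq0.ne'), hlog, tilt]
          field_simp
    refine ContinuousOn.congr ?_ heq
    intro α hα
    refine tendsto_finset_sum _ (fun y _ => Filter.Tendsto.sub ?_ ?_)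
    · exact (Real.continuous_mul_log.tendsto _).comp (hT y α hα)
    · refine Filter.Tendsto.mul (Filter.Tendsto.mul (hE α hα) (hA y α hα)) ?_
      refine Filter.Tendsto.mul (tendsto_nhdsWithin_of_tendsto_nhds
        ((tendsto_const_nhds.sub tendsto_id).inv₀ (by simpa using sub_ne_zero.mpr hα.2.ne'))) ?_
      exact (Real.continuous_mul_log.tendsto _).comp (hB y α hα)
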